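/- The crossed-module condition d(a)▷b = a_(1) b S(a_(2)) holds for all a, b ∈ A if and only if (d(a_(1))▷b) a_(2) = ab holds for all a, b ∈ A (i.e. if and only if A is commutative with respect to the braiding induced by the pushout coaction). (Proposition 2.2, part (3).) -/

import Mathlib

open TensorProduct

noncomputable section

variable (k A H : Type*) [Field k] [Ring A] [Ring H]
  [HopfAlgebra k A] [HopfAlgebra k H]

/-- `t(a⊗h) = d(a)h`. -/
def tmap (d : A →ₗ[k] H) : A ⊗[k] H →ₗ[k] H :=
  LinearMap.mul' k H ∘ₗ map d LinearMap.id

/-- `s(a⊗h) = ε(a)h`. -/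
def smap : A ⊗[k] H →ₗ[k] H :=
  (TensorProduct.lid k H).toLinearMap ∘ₗ map (Coalgebra.counit : A →ₗ[k] k) LinearMap.id

/-- `i(h) = 1⊗h`. -/
def imap : H →ₗ[k] A ⊗[k] H := TensorProduct.mk k A H 1

/-- The tensor-product coproduct `Δ(a⊗h) = (a₁⊗h₁) ⊗ (a₂⊗h₂)` on `H1 = A ⊗ H`. -/
def comul1 : A ⊗[k] H →ₗ[k] (A ⊗[k] H) ⊗[k] (A ⊗[k] H) :=
  (tensorTensorTensorComm k A A H H).toLinearMap ∘ₗ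
    map (Coalgebra.comul : A →ₗ[k] A ⊗[k] A) (Coalgebra.comul : H →ₗ[k] H ⊗[k] H)

/-- The tensor-product counit `ε(a⊗h) = ε(a)ε(h)` on `H1 = A ⊗ H`. -/
def counit1 : A ⊗[k] H →ₗ[k] k :=
  (TensorProduct.lid k k).toLinearMap ∘ₗ
    map (Coalgebra.counit : A →ₗ[k] k) (Coalgebra.counit : H →ₗ[k] k)

/-- The left coaction `DL = (t⊗id)Δ`. -/
def DLmap (d : A →ₗ[k] H) : A ⊗[k] H →ₗ[k] H ⊗[k] (A ⊗[k] H) :=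
  map (tmap k A H d) LinearMap.id ∘ₗ comul1 k A H

/-- The right coaction `DR = (id⊗s)Δ`. -/
def DRmap : A ⊗[k] H →ₗ[k] (A ⊗[k] H) ⊗[k] H :=
  map LinearMap.id (smap k A H) ∘ₗ comul1 k A H

/-- The second product `(a⊗h)∘(b⊗g) = ε(h) ab ⊗ g`. -/
def circ : (A ⊗[k] H) ⊗[k] (A ⊗[k] H) →ₗ[k] A ⊗[k] H :=
  map (LinearMap.mul' k A)
      ((TensorProduct.lid k H).toLinearMap ∘ₗ map (Coalgebra.counit : H →ₗ[k] k) LinearMap.id)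
    ∘ₗ (tensorTensorTensorComm k A H A H).toLinearMap

/-- The quantum groupoid antipode `𝒮(a⊗h) = S(a₁) ⊗ d(a₂)h`. -/
def SS (d : A →ₗ[k] H) : A ⊗[k] H →ₗ[k] A ⊗[k] H :=
  map (HopfAlgebra.antipode (R := k) : A →ₗ[k] A) (tmap k A H d)
    ∘ₗ (TensorProduct.assoc k A A H).toLinearMap
    ∘ₗ map (Coalgebra.comul : A →ₗ[k] A ⊗[k] A) LinearMap.id

/-- The smash product multiplication `(a⊗h)(b⊗g) = a(h₁▷b) ⊗ h₂g`. -/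
def smashMul (act : H ⊗[k] A →ₗ[k] A) :
    (A ⊗[k] H) ⊗[k] (A ⊗[k] H) →ₗ[k] A ⊗[k] H :=
  map (LinearMap.mul' k A) LinearMap.id
  ∘ₗ (TensorProduct.assoc k A A H).symm.toLinearMap
  ∘ₗ map LinearMap.id
      (map act (LinearMap.mul' k H)
        ∘ₗ (tensorTensorTensorComm k H H A H).toLinearMap)
  ∘ₗ (TensorProduct.assoc k A (H ⊗[k] H) (A ⊗[k] H)).toLinearMap
  ∘ₗ map (map LinearMap.id (Coalgebra.comul : H →ₗ[k] H ⊗[k] H)) LinearMap.id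

/-- The cotensor product `H1□H1`. -/
def cot (d : A →ₗ[k] H) : Set ((A ⊗[k] H) ⊗[k] (A ⊗[k] H)) :=
  {x | (TensorProduct.assoc k (A ⊗[k] H) H (A ⊗[k] H)).toLinearMap
        (map (DRmap k A H) LinearMap.id x) = map LinearMap.id (DLmap k A H d) x}

/-- A Hopf (algebra) precrossed module. -/
structure HopfPrecrossedModule (act : H ⊗[k] A →ₗ[k] A) (d : A →ₗ[k] H) : Prop where
  /-- `(hg)▷a = h▷(g▷a)` -/
  act_mul : ∀ (h g : H) (a : A), act ((h * g) ⊗ₜ[k] a) = act (h ⊗ₜ[k] act (g ⊗ₜ[k] a))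
  /-- `1▷a = a` -/
  act_one : ∀ a : A, act ((1 : H) ⊗ₜ[k] a) = a
  /-- `h▷(ab) = (h₁▷a)(h₂▷b)` -/
  act_mul_alg : act ∘ₗ map LinearMap.id (LinearMap.mul' k A)
      = LinearMap.mul' k A ∘ₗ map act act
          ∘ₗ (tensorTensorTensorComm k H H A A).toLinearMap
          ∘ₗ map (Coalgebra.comul : H →ₗ[k] H ⊗[k] H) LinearMap.id
  /-- `h▷1 = ε(h)1` -/
  act_unit : ∀ h : H, act (h ⊗ₜ[k] (1 : A)) = (Coalgebra.counit h : k) • (1 : A)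
  /-- `Δ(h▷a) = (h₁▷a₁)⊗(h₂▷a₂)` -/
  act_comul : (Coalgebra.comul : A →ₗ[k] A ⊗[k] A) ∘ₗ act
      = map act act ∘ₗ (tensorTensorTensorComm k H H A A).toLinearMap
          ∘ₗ map (Coalgebra.comul : H →ₗ[k] H ⊗[k] H) (Coalgebra.comul : A →ₗ[k] A ⊗[k] A)
  /-- `ε(h▷a) = ε(h)ε(a)` -/
  act_counit : ∀ (h : H) (a : A),
      (Coalgebra.counit (act (h ⊗ₜ[k] a)) : k) = Coalgebra.counit h * Coalgebra.counit a
  /-- `h₁ ⊗ (h₂▷a) = h₂ ⊗ (h₁▷a)` -/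
  act_cocomm : map LinearMap.id act ∘ₗ (TensorProduct.assoc k H H A).toLinearMap
        ∘ₗ map (Coalgebra.comul : H →ₗ[k] H ⊗[k] H) LinearMap.id
      = map LinearMap.id act ∘ₗ (TensorProduct.assoc k H H A).toLinearMap
        ∘ₗ map ((TensorProduct.comm k H H).toLinearMap
              ∘ₗ (Coalgebra.comul : H →ₗ[k] H ⊗[k] H)) LinearMap.id
  /-- `d` is multiplicative -/
  d_mul : ∀ a b : A, d (a * b) = d a * d b
  /-- `d(1) = 1` -/
  d_one : d 1 = 1
  /-- `d` is comultiplicative -/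
  d_comul : (Coalgebra.comul : H →ₗ[k] H ⊗[k] H) ∘ₗ d
      = map d d ∘ₗ (Coalgebra.comul : A →ₗ[k] A ⊗[k] A)
  /-- `ε∘d = ε` -/
  d_counit : (Coalgebra.counit : H →ₗ[k] k) ∘ₗ d = (Coalgebra.counit : A →ₗ[k] k)

/-- Proposition 2.2(3): the crossed-module condition `d(a)▷b = a₁ b S(a₂)` holds for all
`a, b ∈ A` iff `(d(a₁)▷b) a₂ = ab` holds for all `a, b ∈ A`. -/
lemma aux_counit_smul {a : A} {ι : Type*} (r : Coalgebra.Repr k a ι) :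
    ∑ i ∈ r.index, Coalgebra.counit (R := k) (r.right i) • r.left i = a := by
  have := congrArg (TensorProduct.rid k A) (Coalgebra.sum_tmul_counit_eq r)
  simp only [map_sum, TensorProduct.rid_tmul, one_smul] at this
  exact this


theorem statement14 (act : H ⊗[k] A →ₗ[k] A) (d : A →ₗ[k] H)
    (hpcm : HopfPrecrossedModule k A H act d) :
    (∀ a b : A,
      act (d a ⊗ₜ[k] b)
        = LinearMap.mul' k A
            (map LinearMap.id
              (LinearMap.mulLeft k b ∘ₗ (HopfAlgebra.antipode (R := k) : A →ₗ[k] A))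
              (Coalgebra.comul a)))
    ↔ (∀ a b : A,
      LinearMap.mul' k A
          (map (act ∘ₗ (TensorProduct.mk k H A).flip b ∘ₗ d) LinearMap.id
            (Coalgebra.comul a))
        = a * b) := by
  constructor
  · intro h a b
    set S : A →ₗ[k] A := (HopfAlgebra.antipode (R := k) : A →ₗ[k] A) with hS
    set r := Coalgebra.Repr.arbitrary k a with hr
    set p : ∀ i, Coalgebra.Repr k (r.left i) (A × A) := fun i => Coalgebra.Repr.arbitrary k (r.left i) with hp
    set q : ∀ i, Coalgebra.Repr k (r.right i) (A × A) := fun i => Coalgebra.Repr.arbitrary k (r.right i) with hq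
    have h1 : LinearMap.mul' k A
          (map (act ∘ₗ (TensorProduct.mk k H A).flip b ∘ₗ d) LinearMap.id
            (Coalgebra.comul a))
        = ∑ i ∈ r.index, act (d (r.left i) ⊗ₜ[k] b) * r.right i := by
      rw [← r.eq]
      simp [map_sum, LinearMap.mul'_apply]
    have h2 : ∀ i, act (d (r.left i) ⊗ₜ[k] b) * r.right i
        = ∑ j ∈ (p i).index,
            (p i).left j * (b * (S ((p i).right j) * r.right i)) := by
      intro i
      rw [h (r.left i) b, ← (p i).eq]
      simp [map_sum, LinearMap.mul'_apply, Finset.sum_mul, mul_assoc]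
    have key := congrArg
      (LinearMap.mul' k A ∘ₗ LinearMap.lTensor A
        (LinearMap.mul' k A ∘ₗ LinearMap.rTensor A (LinearMap.mulLeft k b ∘ₗ S)))
      (Coalgebra.sum_tmul_tmul_eq r p q)
    simp only [map_sum, LinearMap.comp_apply, LinearMap.lTensor_tmul,
      LinearMap.rTensor_tmul, LinearMap.mul'_apply, LinearMap.mulLeft_apply,
      mul_assoc] at key
    have h3 : ∀ i, ∑ j ∈ (q i).index,
          r.left i * (b * (S ((q i).left j) * (q i).right j))
        = Coalgebra.counit (R := k) (r.right i) • (r.left i * b) := by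
      intro i
      rw [← Finset.mul_sum, ← Finset.mul_sum,
        HopfAlgebra.sum_antipode_mul_eq_smul (q i)]
      simp [mul_smul_comm, smul_mul_assoc]
    calc LinearMap.mul' k A
          (map (act ∘ₗ (TensorProduct.mk k H A).flip b ∘ₗ d) LinearMap.id
            (Coalgebra.comul a))
        = ∑ i ∈ r.index, ∑ j ∈ (p i).index,
            (p i).left j * (b * (S ((p i).right j) * r.right i)) := by
          rw [h1]; exact Finset.sum_congr rfl fun i _ => h2 i
      _ = ∑ i ∈ r.index, ∑ j ∈ (q i).index,
            r.left i * (b * (S ((q i).left j) * (q i).right j)) := key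
      _ = ∑ i ∈ r.index, Coalgebra.counit (R := k) (r.right i) • (r.left i * b) :=
          Finset.sum_congr rfl fun i _ => h3 i
      _ = (∑ i ∈ r.index, Coalgebra.counit (R := k) (r.right i) • r.left i) * b := by
          rw [Finset.sum_mul]; exact Finset.sum_congr rfl fun i _ => (smul_mul_assoc _ _ _).symm
      _ = a * b := by rw [aux_counit_smul k A r]
  · intro h a b
    set S : A →ₗ[k] A := (HopfAlgebra.antipode (R := k) : A →ₗ[k] A) with hS
    set r := Coalgebra.Repr.arbitrary k a with hr
    set p : ∀ i, Coalgebra.Repr k (r.left i) (A × A) := fun i => Coalgebra.Repr.arbitrary k (r.left i) with hp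
    set q : ∀ i, Coalgebra.Repr k (r.right i) (A × A) := fun i => Coalgebra.Repr.arbitrary k (r.right i) with hq
    have h1 : LinearMap.mul' k A
          (map LinearMap.id (LinearMap.mulLeft k b ∘ₗ S) (Coalgebra.comul a))
        = ∑ i ∈ r.index, r.left i * (b * S (r.right i)) := by
      rw [← r.eq]
      simp [map_sum, LinearMap.mul'_apply]
    have h2 : ∀ i, r.left i * (b * S (r.right i))
        = ∑ j ∈ (p i).index,
            act (d ((p i).left j) ⊗ₜ[k] b) * ((p i).right j * S (r.right i)) := by
      intro i
      have := h (r.left i) b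
      rw [← (p i).eq] at this
      simp only [map_sum, TensorProduct.map_tmul, LinearMap.comp_apply,
        LinearMap.id_coe, id_eq, TensorProduct.mk_apply, LinearMap.flip_apply,
        LinearMap.mul'_apply] at this
      rw [← mul_assoc, ← this, Finset.sum_mul]
      exact Finset.sum_congr rfl fun j _ => mul_assoc _ _ _
    have key := congrArg
      (LinearMap.mul' k A ∘ₗ map (act ∘ₗ (TensorProduct.mk k H A).flip b ∘ₗ d)
        (LinearMap.mul' k A ∘ₗ LinearMap.lTensor A S))
      (Coalgebra.sum_tmul_tmul_eq r p q)
    simp only [map_sum, LinearMap.comp_apply, TensorProduct.map_tmul,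
      LinearMap.lTensor_tmul, LinearMap.mul'_apply, TensorProduct.mk_apply,
      LinearMap.flip_apply] at key
    have h3 : ∀ i, ∑ j ∈ (q i).index,
          act (d (r.left i) ⊗ₜ[k] b) * ((q i).left j * S ((q i).right j))
        = Coalgebra.counit (R := k) (r.right i) • act (d (r.left i) ⊗ₜ[k] b) := by
      intro i
      rw [← Finset.mul_sum, HopfAlgebra.sum_mul_antipode_eq_smul (q i)]
      simp [mul_smul_comm]
    calc act (d a ⊗ₜ[k] b)
        = act (d (∑ i ∈ r.index, Coalgebra.counit (R := k) (r.right i) • r.left i) ⊗ₜ[k] b) := by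
          rw [aux_counit_smul k A r]
      _ = ∑ i ∈ r.index, Coalgebra.counit (R := k) (r.right i) • act (d (r.left i) ⊗ₜ[k] b) := by
          simp [map_sum, TensorProduct.sum_tmul, ← TensorProduct.smul_tmul', map_smul]
      _ = ∑ i ∈ r.index, ∑ j ∈ (q i).index,
            act (d (r.left i) ⊗ₜ[k] b) * ((q i).left j * S ((q i).right j)) :=
          (Finset.sum_congr rfl fun i _ => (h3 i)).symm
      _ = ∑ i ∈ r.index, ∑ j ∈ (p i).index,
            act (d ((p i).left j) ⊗ₜ[k] b) * ((p i).right j * S (r.right i)) := key.symm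
      _ = ∑ i ∈ r.index, r.left i * (b * S (r.right i)) :=
          (Finset.sum_congr rfl fun i _ => (h2 i)).symm
      _ = LinearMap.mul' k A
          (map LinearMap.id (LinearMap.mulLeft k b ∘ₗ S) (Coalgebra.comul a)) := h1.symm


end
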